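/- For any integers N > r > 0, the sequence s ↦ (1/s)·[C(N, r+1) − C(N−s, r+1)] is decreasing in s, for s ranging over positive integers with s ≤ N. -/
import Mathlib

lemma lto_aux (N r : ℕ) : ∀ s, s ≤ N →
    (N - s).choose (r + 1) + s * (N - (s + 1)).choose r ≤ N.choose (r + 1) := by
  intro s
  induction s with
  | zero => simp
  | succ s ih =>
    intro hs
    have hs' : s ≤ N := Nat.le_of_succ_le hs
    have hsub : N - s = (N - (s + 1)) + 1 := by omega
    have pascal : (N - s).choose (r + 1)
        = (N - (s + 1)).choose r + (N - (s + 1)).choose (r + 1) := by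
      rw [hsub, Nat.choose_succ_succ]
    have hmono : (N - (s + 2)).choose r ≤ (N - (s + 1)).choose r :=
      Nat.choose_le_choose r (by omega)
    have := ih hs'
    calc (N - (s + 1)).choose (r + 1) + (s + 1) * (N - (s + 2)).choose r
        ≤ (N - (s + 1)).choose (r + 1) + (s + 1) * (N - (s + 1)).choose r := by
          exact Nat.add_le_add_left (Nat.mul_le_mul_left _ hmono) _
      _ = (N - s).choose (r + 1) + s * (N - (s + 1)).choose r := by
          rw [pascal]; ring
      _ ≤ N.choose (r + 1) := this

/-- For integers `N > r > 0`, the sequence `s ↦ (1/s) * (C(N, r+1) - C(N-s, r+1))`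
is decreasing in `s` for `1 ≤ s < N`. -/
theorem lto_A_decreasing (N r s : ℕ) (hr : 0 < r) (hrN : r < N)
    (hs1 : 1 ≤ s) (hsN : s < N) :
    ((N.choose (r + 1) : ℝ) - ((N - (s + 1)).choose (r + 1) : ℝ)) / (s + 1) ≤
      ((N.choose (r + 1) : ℝ) - ((N - s).choose (r + 1) : ℝ)) / s := by
  have key : (N - s).choose (r + 1) + s * (N - (s + 1)).choose r ≤ N.choose (r + 1) :=
    lto_aux N r s (le_of_lt hsN)
  have hsub : N - s = (N - (s + 1)) + 1 := by omega
  have pascal : (N - s).choose (r + 1)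
      = (N - (s + 1)).choose r + (N - (s + 1)).choose (r + 1) := by
    rw [hsub, Nat.choose_succ_succ]
  have keyR : ((N - s).choose (r + 1) : ℝ) + s * (N - (s + 1)).choose r
      ≤ N.choose (r + 1) := by exact_mod_cast key
  have pascalR : ((N - s).choose (r + 1) : ℝ)
      = (N - (s + 1)).choose r + (N - (s + 1)).choose (r + 1) := by exact_mod_cast pascal
  have hs0 : (0 : ℝ) < s := by exact_mod_cast hs1
  rw [div_le_div_iff₀ (by positivity) hs0]
  nlinarith [keyR, pascalR, hs0]
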